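/- Let G = (V, E, w) be a weighted graph, E_1, ..., E_t subsets of E with union E, with distinct occurrence numbers 1 = c_1 < c_2 < ... < c_k and associated overlapping cardinality partition. If for each i, H_i is an ε-spectral sparsifier of the induced subgraph G_i = (V, E_i, w_i), then the graph H whose Laplacian is L_H = (∑_{i=1}^t L_{H_i})/(c_1 · c_k) satisfies (1-ε') x^T L_G x ≤ x^T L_H x ≤ (1+ε') x^T L_G x for all x ∈ ℝ^V, for any ε' ≥ 1 - (1-ε)/c_k with ε ≤ ε' < 1. -/

import Mathlib

open Matrix Finset

/-- The weighted graph Laplacian of the graph on vertex set `V` with edge set `F`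
and weight function `w`. -/
noncomputable def lap {V : Type*} [Fintype V] [DecidableEq V]
    (F : Finset (Sym2 V)) (w : Sym2 V → ℝ) : Matrix V V ℝ :=
  fun x y =>
    if x = y then ∑ z ∈ Finset.univ.filter (fun z => z ≠ x ∧ s(x, z) ∈ F), w s(x, z)
    else if s(x, y) ∈ F then -w s(x, y) else 0

/-- The occurrence number `#(e)`: the number of indices `i` with `e ∈ 𝓔 i`. -/
def occ {V : Type*} [DecidableEq V] {t : ℕ} (𝓔 : Fin t → Finset (Sym2 V))
    (e : Sym2 V) : ℕ :=
  (Finset.univ.filter (fun i => e ∈ 𝓔 i)).card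

section helpers

variable {V : Type*} [Fintype V] [DecidableEq V]

lemma lap_eq_sum_single (F : Finset (Sym2 V)) (w : Sym2 V → ℝ) :
    lap F w = ∑ e ∈ F, lap {e} w := by
  ext a b
  simp only [lap, Matrix.sum_apply, Finset.mem_singleton]
  by_cases hab : a = b
  · simp only [hab, if_pos rfl]
    simp only [Finset.sum_filter, if_true]
    rw [Finset.sum_comm]
    refine Finset.sum_congr rfl fun z _ => ?_
    by_cases hz : z = b
    · simp [hz]
    · simp only [hz, ne_eq, not_false_iff, true_and]
      rw [Finset.sum_ite_eq F (s(b,z)) (fun _ => w s(b,z))]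
  · simp only [hab, if_false, if_neg hab]
    rw [Finset.sum_ite_eq F (s(a,b)) (fun _ => -w s(a,b))]

lemma lap_single_apply (w : Sym2 V → ℝ) (u v : V) (huv : u ≠ v) (a b : V) :
    lap {s(u,v)} w a b = w s(u,v) *
      (((if a = u then (1:ℝ) else 0) - if a = v then 1 else 0) *
       ((if b = u then (1:ℝ) else 0) - if b = v then 1 else 0)) := by
  simp only [lap, Finset.mem_singleton]
  by_cases hab : a = b
  · subst hab
    rw [if_pos rfl]
    by_cases hau : a = u
    · subst hau
      have hfil : Finset.univ.filter (fun z => z ≠ a ∧ s(a,z) = s(a,v)) = {v} := by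
        ext z
        simp only [Finset.mem_filter, Finset.mem_univ, true_and, Finset.mem_singleton,
          Sym2.eq_iff]
        constructor
        · rintro ⟨hz, (⟨rfl, rfl⟩ | ⟨rfl, rfl⟩)⟩ <;> tauto
        · rintro rfl
          exact ⟨by tauto, by tauto⟩
      rw [hfil, Finset.sum_singleton]
      simp [huv]
    · by_cases hav : a = v
      · subst hav
        have hfil : Finset.univ.filter (fun z => z ≠ a ∧ s(a,z) = s(u,a)) = {u} := by
          ext z
          simp only [Finset.mem_filter, Finset.mem_univ, true_and, Finset.mem_singleton,
            Sym2.eq_iff]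
          constructor
          · rintro ⟨hz, (⟨rfl, rfl⟩ | ⟨rfl, rfl⟩)⟩ <;> tauto
          · rintro rfl
            exact ⟨by tauto, by tauto⟩
        rw [hfil, Finset.sum_singleton]
        rw [Sym2.eq_swap]
        simp [hau, huv]
      · have hfil : Finset.univ.filter (fun z => z ≠ a ∧ s(a,z) = s(u,v)) = ∅ := by
          ext z
          simp only [Finset.mem_filter, Finset.mem_univ, true_and, Finset.notMem_empty,
            iff_false, not_and, Sym2.eq_iff]
          rintro hz (⟨rfl, rfl⟩ | ⟨rfl, rfl⟩) <;> tauto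
        rw [hfil, Finset.sum_empty]
        simp [hau, hav]
  · rw [if_neg hab]
    by_cases h : s(a,b) = s(u,v)
    · rw [if_pos h, h]
      rw [Sym2.eq_iff] at h
      rcases h with ⟨rfl, rfl⟩ | ⟨rfl, rfl⟩
      · simp [huv, Ne.symm huv]
      · simp [huv, Ne.symm huv]
    · rw [if_neg h]
      rw [Sym2.eq_iff] at h
      push_neg at h
      by_cases hau : a = u <;> by_cases hav : a = v <;> by_cases hbu : b = u <;>
        by_cases hbv : b = v <;> simp_all

lemma lap_loop (w : Sym2 V → ℝ) (u : V) : lap {s(u,u)} w = 0 := by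
  ext a b
  simp only [lap, Finset.mem_singleton, Matrix.zero_apply]
  by_cases hab : a = b
  · subst hab
    rw [if_pos rfl]
    have hfil : Finset.univ.filter (fun z => z ≠ a ∧ s(a,z) = s(u,u)) = ∅ := by
      ext z
      simp only [Finset.mem_filter, Finset.mem_univ, true_and, Finset.notMem_empty,
        iff_false, not_and, Sym2.eq_iff]
      rintro hz (⟨rfl, rfl⟩ | ⟨rfl, rfl⟩) <;> exact hz rfl
    rw [hfil, Finset.sum_empty]
  · rw [if_neg hab]
    have : ¬ s(a,b) = s(u,u) := by
      rw [Sym2.eq_iff]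
      rintro (⟨rfl, rfl⟩ | ⟨rfl, rfl⟩) <;> exact hab rfl
    rw [if_neg this]

lemma quad_single (w : Sym2 V → ℝ) (x : V → ℝ) (u v : V) (huv : u ≠ v) :
    x ⬝ᵥ (lap {s(u,v)} w).mulVec x = w s(u,v) * (x u - x v)^2 := by
  have key : ∀ a, (lap {s(u,v)} w).mulVec x a
      = w s(u,v) * ((if a = u then (1:ℝ) else 0) - if a = v then 1 else 0) * (x u - x v) := by
    intro a
    unfold Matrix.mulVec dotProduct
    have : ∀ b, lap {s(u,v)} w a b * x b
        = (w s(u,v) * ((if a = u then (1:ℝ) else 0) - if a = v then 1 else 0)) *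
          (((if b = u then (1:ℝ) else 0) - if b = v then 1 else 0) * x b) := by
      intro b; rw [lap_single_apply w u v huv]; ring
    rw [Finset.sum_congr rfl fun b _ => this b, ← Finset.mul_sum]
    congr 1
    have : ∀ b, ((if b = u then (1:ℝ) else 0) - if b = v then 1 else 0) * x b
        = (if b = u then x b else 0) - (if b = v then x b else 0) := by
      intro b; split_ifs <;> ring
    rw [Finset.sum_congr rfl fun b _ => this b, Finset.sum_sub_distrib]
    simp [Finset.sum_ite_eq']
  unfold dotProduct
  rw [Finset.sum_congr rfl fun a _ => by rw [key a]]
  have : ∀ a, x a * (w s(u,v) * ((if a = u then (1:ℝ) else 0) - if a = v then 1 else 0) * (x u - x v))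
      = (w s(u,v) * (x u - x v)) * ((if a = u then x a else 0) - (if a = v then x a else 0)) := by
    intro a; split_ifs <;> ring
  rw [Finset.sum_congr rfl fun a _ => this a, ← Finset.mul_sum, Finset.sum_sub_distrib]
  simp [Finset.sum_ite_eq']
  ring

lemma quad_single_nonneg (w : Sym2 V → ℝ) (hw : ∀ e, 0 < w e) (x : V → ℝ) (e : Sym2 V) :
    0 ≤ x ⬝ᵥ (lap {e} w).mulVec x := by
  induction e using Sym2.ind with
  | _ u v =>
    by_cases huv : u = v
    · subst huv; rw [lap_loop]; simp
    · rw [quad_single w x u v huv]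
      exact mul_nonneg (hw _).le (sq_nonneg _)

lemma dot_sum_mulVec {ι : Type*} (s : Finset ι) (M : ι → Matrix V V ℝ) (x : V → ℝ) :
    x ⬝ᵥ (∑ i ∈ s, M i).mulVec x = ∑ i ∈ s, x ⬝ᵥ (M i).mulVec x := by
  rw [show (∑ i ∈ s, M i).mulVec x = ∑ i ∈ s, (M i).mulVec x from by
    funext a
    simp only [Matrix.mulVec, dotProduct, Matrix.sum_apply, Finset.sum_apply,
      Finset.sum_mul]
    rw [Finset.sum_comm]]
  simp only [dotProduct, Finset.sum_apply, Finset.mul_sum]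
  rw [Finset.sum_comm]

lemma quad_sum (F : Finset (Sym2 V)) (w : Sym2 V → ℝ) (x : V → ℝ) :
    x ⬝ᵥ (lap F w).mulVec x = ∑ e ∈ F, x ⬝ᵥ (lap {e} w).mulVec x := by
  rw [lap_eq_sum_single, dot_sum_mulVec]

end helpers

/-- Theorem 2: the union of ε-spectral sparsifiers (with Laplacian rescaled by
`1/(c_1 c_k)`) is an ε'-spectral sparsifier of `G`, for any
`ε' ≥ 1 - (1-ε)/c_k` with `ε ≤ ε' < 1`. -/
theorem union_of_sparsifiers
    {V : Type*} [Fintype V] [DecidableEq V] {t k : ℕ}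
    (E : Finset (Sym2 V)) (w : Sym2 V → ℝ) (hw : ∀ e, 0 < w e)
    (𝓔 : Fin t → Finset (Sym2 V))
    (hsub : ∀ i, 𝓔 i ⊆ E)
    (hunion : Finset.univ.biUnion 𝓔 = E)
    (c : Fin (k + 1) → ℕ) (hc : StrictMono c) (hc1 : c 0 = 1)
    (hcov : ∀ e ∈ E, ∃ j, occ 𝓔 e = c j)
    (ε ε' : ℝ) (hε0 : 0 ≤ ε)
    (LH : Fin t → Matrix V V ℝ)
    (hH : ∀ i, ∀ x : V → ℝ,
      (1 - ε) * (x ⬝ᵥ (lap (𝓔 i) w).mulVec x) ≤ x ⬝ᵥ (LH i).mulVec x ∧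
      x ⬝ᵥ (LH i).mulVec x ≤ (1 + ε) * (x ⬝ᵥ (lap (𝓔 i) w).mulVec x))
    (hε' : 1 - (1 - ε) / (c (Fin.last k) : ℝ) ≤ ε')
    (hεε' : ε ≤ ε') (hε'1 : ε' < 1) :
    ∀ x : V → ℝ,
      (1 - ε') * (x ⬝ᵥ (lap E w).mulVec x) ≤
        x ⬝ᵥ ((((c 0 : ℝ) * (c (Fin.last k) : ℝ))⁻¹ • ∑ i, LH i).mulVec x) ∧
      x ⬝ᵥ ((((c 0 : ℝ) * (c (Fin.last k) : ℝ))⁻¹ • ∑ i, LH i).mulVec x) ≤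
        (1 + ε') * (x ⬝ᵥ (lap E w).mulVec x) := by
  intro x
  set cl : ℝ := (c (Fin.last k) : ℝ) with hcldef
  have hcl1 : (1:ℝ) ≤ cl := by
    rw [hcldef]
    have : c 0 ≤ c (Fin.last k) := hc.monotone (Fin.le_last 0)
    rw [hc1] at this
    exact_mod_cast this
  have hcl0 : (0:ℝ) < cl := lt_of_lt_of_le one_pos hcl1
  set q : Sym2 V → ℝ := fun e => x ⬝ᵥ (lap {e} w).mulVec x with hqdef
  have hq0 : ∀ e, 0 ≤ q e := fun e => quad_single_nonneg w hw x e
  have hQ : ∀ F : Finset (Sym2 V), x ⬝ᵥ (lap F w).mulVec x = ∑ e ∈ F, q e :=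
    fun F => quad_sum F w x
  have hQE0 : 0 ≤ ∑ e ∈ E, q e := Finset.sum_nonneg fun e _ => hq0 e
  have hocc : ∀ e ∈ E, 1 ≤ occ 𝓔 e ∧ occ 𝓔 e ≤ c (Fin.last k) := by
    intro e he
    obtain ⟨j, hj⟩ := hcov e he
    refine ⟨?_, ?_⟩
    · rw [hj, ← hc1]; exact hc.monotone (Fin.zero_le j)
    · rw [hj]; exact hc.monotone (Fin.le_last j)
  have hsum : ∑ i, x ⬝ᵥ (lap (𝓔 i) w).mulVec x = ∑ e ∈ E, (occ 𝓔 e : ℝ) * q e := by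
    have h1 : ∀ i, x ⬝ᵥ (lap (𝓔 i) w).mulVec x = ∑ e ∈ E, if e ∈ 𝓔 i then q e else 0 := by
      intro i
      rw [hQ, ← Finset.sum_filter]
      refine (Finset.sum_congr ?_ fun e _ => rfl).symm
      ext e
      simp only [Finset.mem_filter]
      exact ⟨fun h => h.2, fun h => ⟨hsub i h, h⟩⟩
    rw [Finset.sum_congr rfl fun i _ => h1 i, Finset.sum_comm]
    refine Finset.sum_congr rfl fun e _ => ?_
    rw [← Finset.sum_filter, Finset.sum_const, occ]
    simp [nsmul_eq_mul]
  have hlow : ∑ e ∈ E, q e ≤ ∑ e ∈ E, (occ 𝓔 e : ℝ) * q e :=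
    Finset.sum_le_sum fun e he =>
      le_mul_of_one_le_left (hq0 e) (by exact_mod_cast (hocc e he).1)
  have hhigh : ∑ e ∈ E, (occ 𝓔 e : ℝ) * q e ≤ cl * ∑ e ∈ E, q e := by
    rw [Finset.mul_sum]
    refine Finset.sum_le_sum fun e he => ?_
    refine mul_le_mul_of_nonneg_right ?_ (hq0 e)
    rw [hcldef]
    exact_mod_cast (hocc e he).2
  have h1ε : 0 < 1 - ε := by
    by_contra h
    push_neg at h
    have hd : (1 - ε) / cl ≤ 0 := div_nonpos_of_nonpos_of_nonneg (by linarith) hcl0.le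
    linarith
  have hLHS : x ⬝ᵥ (((c 0 : ℝ) * cl)⁻¹ • ∑ i, LH i).mulVec x
      = cl⁻¹ * ∑ i, x ⬝ᵥ (LH i).mulVec x := by
    have hscal : ((c 0 : ℝ) * cl)⁻¹ = cl⁻¹ := by rw [hc1]; simp
    rw [hscal, Matrix.smul_mulVec, dotProduct_smul, dot_sum_mulVec, smul_eq_mul]
  have hml : (1 - ε) * ∑ e ∈ E, q e ≤ ∑ i, x ⬝ᵥ (LH i).mulVec x := by
    calc (1 - ε) * ∑ e ∈ E, q e
        ≤ (1 - ε) * ∑ e ∈ E, (occ 𝓔 e : ℝ) * q e :=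
          mul_le_mul_of_nonneg_left hlow h1ε.le
      _ = ∑ i, (1 - ε) * (x ⬝ᵥ (lap (𝓔 i) w).mulVec x) := by
          rw [← hsum, Finset.mul_sum]
      _ ≤ ∑ i, x ⬝ᵥ (LH i).mulVec x := Finset.sum_le_sum fun i _ => (hH i x).1
  have hmu : ∑ i, x ⬝ᵥ (LH i).mulVec x ≤ (1 + ε) * (cl * ∑ e ∈ E, q e) := by
    calc ∑ i, x ⬝ᵥ (LH i).mulVec x
        ≤ ∑ i, (1 + ε) * (x ⬝ᵥ (lap (𝓔 i) w).mulVec x) :=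
          Finset.sum_le_sum fun i _ => (hH i x).2
      _ = (1 + ε) * ∑ e ∈ E, (occ 𝓔 e : ℝ) * q e := by rw [← Finset.mul_sum, hsum]
      _ ≤ (1 + ε) * (cl * ∑ e ∈ E, q e) :=
          mul_le_mul_of_nonneg_left hhigh (by linarith)
  constructor
  · rw [hLHS, hQ]
    calc (1 - ε') * ∑ e ∈ E, q e
        ≤ ((1 - ε) / cl) * ∑ e ∈ E, q e :=
          mul_le_mul_of_nonneg_right (by linarith) hQE0
      _ = cl⁻¹ * ((1 - ε) * ∑ e ∈ E, q e) := by ring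
      _ ≤ cl⁻¹ * ∑ i, x ⬝ᵥ (LH i).mulVec x :=
          mul_le_mul_of_nonneg_left hml (inv_nonneg.mpr hcl0.le)
  · rw [hLHS, hQ]
    calc cl⁻¹ * ∑ i, x ⬝ᵥ (LH i).mulVec x
        ≤ cl⁻¹ * ((1 + ε) * (cl * ∑ e ∈ E, q e)) :=
          mul_le_mul_of_nonneg_left hmu (inv_nonneg.mpr hcl0.le)
      _ = (1 + ε) * ∑ e ∈ E, q e := by
          field_simp
      _ ≤ (1 + ε') * ∑ e ∈ E, q e :=
          mul_le_mul_of_nonneg_right (by linarith) hQE0
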